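/- Let V be a faithful irreducible ℚ-representation of a finite abelian group A. Then A ≅ C_n for some n and V is isomorphic as an A-representation to the cyclotomic module V_n = ℚ[t]/(Φ_n(t)), with a generator of A acting by multiplication by [t]. -/

import Mathlib

open Polynomial

private lemma commute_aeval_aux {R M : Type*} [CommRing R] [AddCommGroup M] [Module R M]
    {g f : Module.End R M} (h : Commute g f) (p : R[X]) :
    Commute g (Polynomial.aeval f p) := by
  induction p using Polynomial.induction_on' with
  | add p q hp hq => rw [map_add]; exact hp.add_right hq
  | monomial k c =>
      rw [aeval_monomial]
      have h1 : Commute g (algebraMap R (Module.End R M) c) := (Algebra.commutes c g).symm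
      exact h1.mul_right (h.pow_right k)

/-- Let `V` be a faithful irreducible `ℚ`-representation of a finite abelian group `A`.
Then `A ≅ C_n` for some `n` (it is generated by an element `a` of order `n = |A|`), and `V` is
isomorphic as an `A`-representation to the cyclotomic module `V_n = ℚ[t]/(Φ_n(t))`,
with the generator `a` acting by multiplication by the class `[t]`. -/
theorem faithful_irreducible_rat_rep_iso_cyclotomic
    (A : Type*) [CommGroup A] [Finite A]
    (V : Type*) [AddCommGroup V] [Module ℚ V] [FiniteDimensional ℚ V] [Nontrivial V]
    (ρ : A →* (V ≃ₗ[ℚ] V)) (hfaith : Function.Injective ρ)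
    (hirr : ∀ W : Submodule ℚ V, (∀ a : A, ∀ v ∈ W, ρ a v ∈ W) → W = ⊥ ∨ W = ⊤) :
    ∃ n : ℕ, 0 < n ∧ ∃ a : A, orderOf a = n ∧ (∀ b : A, b ∈ Subgroup.zpowers a) ∧
      ∃ e : V ≃ₗ[ℚ] (ℚ[X] ⧸ Ideal.span {cyclotomic n ℚ}),
        ∀ v : V, e (ρ a v) = (Ideal.Quotient.mk (Ideal.span {cyclotomic n ℚ}) X) * e v := by
  classical
  set τ : A →* Module.End ℚ V :=
    (LinearEquiv.automorphismGroup.toLinearMapMonoidHom).comp ρ with hτ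
  have hτρ : ∀ (b : A) (v : V), τ b v = ρ b v := fun _ _ => rfl
  have hτinj : Function.Injective τ := by
    intro b c h
    exact hfaith (LinearEquiv.toLinearMap_injective h)
  have hτcomm : ∀ b c : A, Commute (τ b) (τ c) := by
    intro b c
    show τ b * τ c = τ c * τ b
    rw [← map_mul, ← map_mul, mul_comm]
  -- the commutative subalgebra generated by the image of `τ`
  set S : Set (Module.End ℚ V) := Set.range τ with hS
  have hScomm : ∀ x ∈ S, ∀ y ∈ S, x * y = y * x := by
    rintro x ⟨b, rfl⟩ y ⟨c, rfl⟩
    exact hτcomm b c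
  set B : Subalgebra ℚ (Module.End ℚ V) := Algebra.adjoin ℚ S with hB
  have hBle : B ≤ Subalgebra.centralizer ℚ S :=
    Algebra.adjoin_le (fun x hx => Set.mem_centralizer_iff.mpr
      (fun y hy => hScomm y hy x hx))
  have hcomm' : ∀ x ∈ B, ∀ b : A, Commute (τ b) x := by
    intro x hx b
    exact (hBle hx) (τ b) ⟨b, rfl⟩
  -- every nonzero element of B is injective
  have hker : ∀ x : Module.End ℚ V, x ∈ B → x ≠ 0 → Function.Injective x := by
    intro x hx hx0
    have hW : ∀ b : A, ∀ v ∈ LinearMap.ker x, ρ b v ∈ LinearMap.ker x := by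
      intro b v hv
      rw [LinearMap.mem_ker] at hv ⊢
      have hc := hcomm' x hx b
      have h1 : x (τ b v) = τ b (x v) := by
        have := congrArg (fun g : Module.End ℚ V => g v) hc
        simpa [Module.End.mul_apply] using this.symm
      rw [← hτρ, h1, hv, map_zero]
    rcases hirr _ hW with h | h
    · exact LinearMap.ker_eq_bot.mp h
    · exact absurd (LinearMap.ker_eq_top.mp h) hx0
  -- B is a commutative domain, so A is cyclic
  letI : CommRing ↥B := Algebra.adjoinCommRingOfComm ℚ hScomm
  haveI : Nontrivial ↥B := by
    refine ⟨1, 0, fun h => ?_⟩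
    have h1 : (1 : Module.End ℚ V) = 0 := congrArg Subtype.val h
    exact one_ne_zero h1
  haveI : NoZeroDivisors ↥B := by
    refine ⟨?_⟩
    rintro ⟨x, hx⟩ ⟨y, hy⟩ hxy
    by_cases h0 : x = 0
    · exact Or.inl (Subtype.ext h0)
    · right
      apply Subtype.ext
      have hinj := hker x hx h0
      have hxy' : x * y = 0 := congrArg Subtype.val hxy
      show y = 0
      ext v
      have := congrArg (fun g : Module.End ℚ V => g v) hxy'
      simp only [Module.End.mul_apply, LinearMap.zero_apply] at this ⊢
      exact hinj (by simpa using this)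
  haveI : IsDomain ↥B := NoZeroDivisors.to_isDomain _
  set χ : A →* ↥B :=
    { toFun := fun b => ⟨τ b, Algebra.subset_adjoin ⟨b, rfl⟩⟩
      map_one' := Subtype.ext (map_one τ)
      map_mul' := fun b c => Subtype.ext (map_mul τ b c) } with hχ
  haveI hcyc : IsCyclic A :=
    isCyclic_of_subgroup_isDomain χ
      (fun b c h => hτinj (congrArg Subtype.val h))
  obtain ⟨a, ha⟩ := hcyc.exists_generator
  set n := orderOf a with hn
  have hnpos : 0 < n := orderOf_pos a
  set f : Module.End ℚ V := τ a with hf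
  have hfn : f ^ n = 1 := by rw [hf, ← map_pow, hn, pow_orderOf_eq_one, map_one]
  have hint : IsIntegral ℚ f := Algebra.IsIntegral.isIntegral f
  set P : ℚ[X] := minpoly ℚ f with hP
  have hP0 : P ≠ 0 := minpoly.ne_zero hint
  have hPmonic : P.Monic := minpoly.monic hint
  have hPdeg : 0 < P.natDegree := minpoly.natDegree_pos hint
  have hPnu : ¬ IsUnit P := by
    intro h
    have := natDegree_eq_zero_of_isUnit h
    omega
  have hP1 : P ∣ X ^ n - 1 := by
    apply minpoly.dvd
    rw [map_sub, map_pow, aeval_X, map_one, hfn, sub_self]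
  -- P is irreducible
  have hPirr : Irreducible P := by
    obtain ⟨p, hpirr, hpdvd⟩ := WfDvdMonoid.exists_irreducible_factor hPnu hP0
    have hWinv : ∀ b : A, ∀ v ∈ LinearMap.ker (aeval f p),
        ρ b v ∈ LinearMap.ker (aeval f p) := by
      intro b v hv
      rw [LinearMap.mem_ker] at hv ⊢
      have hc : Commute (τ b) (aeval f p) := commute_aeval_aux (hτcomm b a) p
      have h1 : (aeval f p) (τ b v) = τ b ((aeval f p) v) := by
        have := congrArg (fun g : Module.End ℚ V => g v) hc
        simpa [Module.End.mul_apply] using this.symm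
      rw [← hτρ, h1, hv, map_zero]
    rcases hirr _ hWinv with hbot | htop
    · -- aeval f p is injective : contradiction
      exfalso
      obtain ⟨q, hq⟩ := hpdvd
      have hq0 : aeval f q = 0 := by
        ext v
        have h1 : aeval f p (aeval f q v) = 0 := by
          rw [← Module.End.mul_apply, ← map_mul, ← hq, minpoly.aeval, LinearMap.zero_apply]
        have h2 : aeval f q v ∈ LinearMap.ker (aeval f p) := h1
        rw [hbot] at h2
        simpa using h2
      have hPq : P ∣ q := minpoly.dvd ℚ f hq0
      have hqne : q ≠ 0 := by
        rintro rfl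
        rw [mul_zero] at hq
        exact hP0 hq
      have hle := Polynomial.natDegree_le_of_dvd hPq hqne
      have hpne : p ≠ 0 := hpirr.ne_zero
      have hdeg : P.natDegree = p.natDegree + q.natDegree := by
        rw [hq, natDegree_mul hpne hqne]
      have hpdeg : p.natDegree = 0 := by omega
      apply hpirr.not_isUnit
      rw [Polynomial.isUnit_iff_degree_eq_zero, Polynomial.degree_eq_natDegree hpne, hpdeg]
      rfl
    · have hp0 : aeval f p = 0 := LinearMap.ker_eq_top.mp htop
      exact (associated_of_dvd_dvd hpdvd (minpoly.dvd ℚ f hp0)).irreducible hpirr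
  -- P is a cyclotomic polynomial Φ_d with d ∣ n
  have hPdvd : P ∣ ∏ d ∈ n.divisors, cyclotomic d ℚ := by
    rw [prod_cyclotomic_eq_X_pow_sub_one hnpos]
    exact hP1
  obtain ⟨d, hdmem, hPd⟩ := (hPirr.prime).exists_mem_finset_dvd hPdvd
  have hd0 : 0 < d := Nat.pos_of_mem_divisors hdmem
  have hdn : d ∣ n := (Nat.mem_divisors.mp hdmem).1
  have hPeq : P = cyclotomic d ℚ :=
    eq_of_monic_of_associated hPmonic (cyclotomic.monic d ℚ)
      (hPirr.associated_of_dvd (cyclotomic.irreducible_rat hd0) hPd)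
  -- faithfulness forces d = n
  have hfd : f ^ d = 1 := by
    have h1 : aeval f ((X : ℚ[X]) ^ d - 1) = 0 := by
      obtain ⟨c, hc⟩ : P ∣ (X : ℚ[X]) ^ d - 1 := by
        rw [hPeq]; exact cyclotomic.dvd_X_pow_sub_one d ℚ
      rw [hc, map_mul, minpoly.aeval, zero_mul]
    rw [map_sub, map_pow, aeval_X, map_one, sub_eq_zero] at h1
    exact h1
  have had : a ^ d = 1 := by
    apply hτinj
    rw [map_pow, map_one]
    exact hfd
  have hdeq : d = n := Nat.dvd_antisymm hdn (hn ▸ orderOf_dvd_of_pow_eq_one had)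
  have hmin : minpoly ℚ f = cyclotomic n ℚ := by rw [← hP, hPeq, hdeq]
  -- build the isomorphism
  set I : Ideal ℚ[X] := Ideal.span {cyclotomic n ℚ} with hI
  set π : ℚ[X] →+* ℚ[X] ⧸ I := Ideal.Quotient.mk I with hπ
  have hIker : ∀ p ∈ I, aeval f p = 0 := by
    intro p hp
    obtain ⟨c, hc⟩ := Ideal.mem_span_singleton.mp hp
    rw [hc, map_mul, ← hmin, minpoly.aeval, zero_mul]
  set Φ : (ℚ[X] ⧸ I) →ₐ[ℚ] Module.End ℚ V :=
    Ideal.Quotient.liftₐ I (Polynomial.aeval f) hIker with hΦ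
  have hΦmk : ∀ p : ℚ[X], Φ (π p) = aeval f p := by
    intro p
    rw [hΦ, Ideal.Quotient.liftₐ_apply, hπ]
    rfl
  have hΦX : Φ (π X) = f := by rw [hΦmk, aeval_X]
  have hΦinj : Function.Injective Φ := by
    rw [injective_iff_map_eq_zero]
    intro k hk
    obtain ⟨p, rfl⟩ := Ideal.Quotient.mk_surjective k
    have h1 : aeval f p = 0 := by rw [← hΦmk]; exact hk
    have h2 : cyclotomic n ℚ ∣ p := hmin ▸ minpoly.dvd ℚ f h1
    exact Ideal.Quotient.eq_zero_iff_mem.mpr (Ideal.mem_span_singleton.mpr h2)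
  -- every ρ b commutes with every Φ k
  have hbpow : ∀ b : A, ∃ j : ℕ, a ^ j = b := by
    intro b
    exact (isOfFinOrder_of_finite a).mem_powers_iff_mem_zpowers.mpr (ha b)
  have hcommΦ : ∀ (b : A) (k : ℚ[X] ⧸ I), Commute (τ b) (Φ k) := by
    intro b k
    obtain ⟨j, rfl⟩ := hbpow b
    rw [map_pow, ← hf, ← hΦX, ← map_pow]
    exact ((Commute.all _ k).map Φ)
  -- nonzero elements of the image of Φ act injectively
  have hΦinjEnd : ∀ k : ℚ[X] ⧸ I, k ≠ 0 → Function.Injective (Φ k) := by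
    intro k hk
    have hW : ∀ b : A, ∀ v ∈ LinearMap.ker (Φ k), ρ b v ∈ LinearMap.ker (Φ k) := by
      intro b v hv
      rw [LinearMap.mem_ker] at hv ⊢
      have h1 : (Φ k) (τ b v) = τ b ((Φ k) v) := by
        have := congrArg (fun g : Module.End ℚ V => g v) (hcommΦ b k)
        simpa [Module.End.mul_apply] using this.symm
      rw [← hτρ, h1, hv, map_zero]
    rcases hirr _ hW with h | h
    · exact LinearMap.ker_eq_bot.mp h
    · exfalso
      exact hk (hΦinj (by rw [map_zero]; exact LinearMap.ker_eq_top.mp h))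
  obtain ⟨v₀, hv₀⟩ := exists_ne (0 : V)
  set Ψ : (ℚ[X] ⧸ I) →ₗ[ℚ] V := (LinearMap.applyₗ v₀).comp Φ.toLinearMap with hΨ
  have hΨapp : ∀ k : ℚ[X] ⧸ I, Ψ k = Φ k v₀ := fun _ => rfl
  have hΨinj : Function.Injective Ψ := by
    rw [injective_iff_map_eq_zero]
    intro k hk
    by_contra h0
    apply hv₀
    apply hΦinjEnd k h0
    rw [map_zero]
    exact hk
  have hΨsurj : Function.Surjective Ψ := by
    rw [← LinearMap.range_eq_top]
    have hinv : ∀ b : A, ∀ v ∈ LinearMap.range Ψ, ρ b v ∈ LinearMap.range Ψ := by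
      rintro b v ⟨k, rfl⟩
      obtain ⟨j, rfl⟩ := hbpow b
      refine ⟨(π X) ^ j * k, ?_⟩
      rw [hΨapp, hΨapp, map_mul, map_pow, hΦX]
      show (f ^ j * Φ k) v₀ = ρ (a ^ j) (Φ k v₀)
      rw [← hτρ, map_pow]
      rfl
    rcases hirr (LinearMap.range Ψ) hinv with h | h
    · exfalso
      have h1 : Ψ 1 ∈ LinearMap.range Ψ := ⟨1, rfl⟩
      rw [h] at h1
      apply hv₀
      have := Submodule.mem_bot ℚ |>.mp h1
      rw [hΨapp, map_one] at this
      simpa using this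
    · exact h
  set g : (ℚ[X] ⧸ I) ≃ₗ[ℚ] V := LinearEquiv.ofBijective Ψ ⟨hΨinj, hΨsurj⟩ with hg
  refine ⟨n, hnpos, a, rfl, ha, g.symm, ?_⟩
  intro v
  have h1 : ∀ k : ℚ[X] ⧸ I, Ψ (π X * k) = f (Ψ k) := by
    intro k
    rw [hΨapp, hΨapp, map_mul, hΦX]
    rfl
  have h2 : v = Ψ (g.symm v) := (g.apply_symm_apply v).symm
  have h3 : ρ a v = Ψ (π X * g.symm v) := by
    rw [h1]
    conv_lhs => rw [h2]
    rfl
  rw [h3]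
  exact g.symm_apply_apply _
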